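/- Let P and Q be probability measures on a measurable space with Q ≪ P allowing the χ²-divergence χ²(P‖Q) = ∫ (dP/dQ)² dQ − 1 to be finite. Then 1 − TV(P,Q) ≥ (1/2)·exp(−KL(P‖Q)) ≥ (1/2)·1/(1 + χ²(P‖Q)), where TV is total variation distance and KL the Kullback–Leibler divergence. -/

import Mathlib

open MeasureTheory Real

/-- Total variation distance between two measures, as the supremum over measurable
sets of the absolute difference of their (real-valued) masses. -/
noncomputable def tvDist {Ω : Type*} [MeasurableSpace Ω] (P Q : Measure Ω) : ℝ :=
  ⨆ A : {A : Set Ω // MeasurableSet A}, |(P A.1).toReal - (Q A.1).toReal|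

/-- Kullback–Leibler divergence KL(P‖Q) = ∫ log(dP/dQ) dP. -/
noncomputable def klDiv' {Ω : Type*} [MeasurableSpace Ω] (P Q : Measure Ω) : ℝ :=
  ∫ x, Real.log ((P.rnDeriv Q x).toReal) ∂P

/-- χ²-divergence χ²(P‖Q) = ∫ (dP/dQ)² dQ − 1. -/
noncomputable def chi2Div {Ω : Type*} [MeasurableSpace Ω] (P Q : Measure Ω) : ℝ :=
  (∫ x, ((P.rnDeriv Q x).toReal) ^ 2 ∂Q) - 1

private lemma aux_sqrt_amgm {u v : ℝ} (hu : 0 ≤ u) (hv : 0 ≤ v) :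
    Real.sqrt (u * v) ≤ (u + v) / 2 := by
  rw [Real.sqrt_mul hu]
  nlinarith [sq_nonneg (Real.sqrt u - Real.sqrt v), Real.sq_sqrt hu, Real.sq_sqrt hv,
    Real.sqrt_nonneg u, Real.sqrt_nonneg v]

private lemma aux_mul_inv_sqrt {a : ℝ} (ha : 0 ≤ a) :
    a * (Real.sqrt a)⁻¹ = Real.sqrt a := by
  rcases ha.eq_or_lt with h | h
  · simp [← h]
  · have hs : Real.sqrt a ≠ 0 := (Real.sqrt_pos.mpr h).ne'
    field_simp
    rw [Real.sq_sqrt ha]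

theorem stmt_6 {Ω : Type*} [MeasurableSpace Ω] (P Q : Measure Ω)
    [IsProbabilityMeasure P] [IsProbabilityMeasure Q]
    (hPQ : P ≪ Q)
    (hchi : Integrable (fun x => ((P.rnDeriv Q x).toReal) ^ 2) Q)
    (hkl : Integrable (fun x => Real.log ((P.rnDeriv Q x).toReal)) P) :
    (1/2) * Real.exp (-(klDiv' P Q)) ≤ 1 - tvDist P Q ∧
    (1/2) * (1 / (1 + chi2Div P Q)) ≤ (1/2) * Real.exp (-(klDiv' P Q)) := by
  classical
  set g : Ω → ℝ := fun x => (P.rnDeriv Q x).toReal with hg_def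
  have hg_nonneg : ∀ x, 0 ≤ g x := fun x => ENNReal.toReal_nonneg
  have hg_meas : Measurable g := (Measure.measurable_rnDeriv P Q).ennreal_toReal
  have hg_int : Integrable g Q := Measure.integrable_toReal_rnDeriv
  have hg_one : ∫ x, g x ∂Q = 1 := by
    rw [hg_def, Measure.integral_toReal_rnDeriv hPQ]; simp
  have hg_pos : ∀ᵐ x ∂P, 0 < g x := by
    filter_upwards [Measure.rnDeriv_pos hPQ, hPQ.ae_le (Measure.rnDeriv_lt_top P Q)] with x h1 h2
    exact ENNReal.toReal_pos h1.ne' h2.ne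
  have hKL_def : klDiv' P Q = ∫ x, Real.log (g x) ∂P := rfl
  -- min and max with 1
  set mi : Ω → ℝ := fun x => min (g x) 1 with hmi_def
  set ma : Ω → ℝ := fun x => max (g x) 1 with hma_def
  have hmi_nonneg : ∀ x, 0 ≤ mi x := fun x => le_min (hg_nonneg x) zero_le_one
  have hmi_le_one : ∀ x, mi x ≤ 1 := fun x => min_le_right _ _
  have hmi_le_g : ∀ x, mi x ≤ g x := fun x => min_le_left _ _
  have hmi_int : Integrable mi Q := by
    refine Integrable.mono' (integrable_const 1) ((hg_meas.min measurable_const).aestronglyMeasurable) ?_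
    exact Filter.Eventually.of_forall fun x => by
      rw [Real.norm_eq_abs, abs_of_nonneg (hmi_nonneg x)]; exact hmi_le_one x
  have hma_int : Integrable ma Q := by
    refine Integrable.mono' (hg_int.add (integrable_const 1)) ((hg_meas.max measurable_const).aestronglyMeasurable) ?_
    refine Filter.Eventually.of_forall fun x => ?_
      
    rw [Real.norm_eq_abs, abs_of_nonneg (le_trans zero_le_one (le_max_right _ _))]
    show max (g x) 1 ≤ g x + 1
    exact max_le (by linarith [hg_nonneg x]) (by linarith [hg_nonneg x])
  set m : ℝ := ∫ x, mi x ∂Q with hm_def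
  have hm_nonneg : 0 ≤ m := integral_nonneg hmi_nonneg
  have hM : ∫ x, ma x ∂Q = 2 - m := by
    have h : ∀ x, ma x = g x + 1 - mi x := by
      intro x
      have := min_add_max (g x) 1
      simp only [hmi_def, hma_def]; linarith
    calc ∫ x, ma x ∂Q = ∫ x, (g x + 1 - mi x) ∂Q := by
          exact integral_congr_ae (Filter.Eventually.of_forall h)
      _ = (∫ x, (g x + 1) ∂Q) - ∫ x, mi x ∂Q :=
          integral_sub (hg_int.add (integrable_const 1)) hmi_int
      _ = 2 - m := by
          rw [integral_add hg_int (integrable_const 1), hg_one]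
          simp only [integral_const, measure_univ, ENNReal.toReal_one, smul_eq_mul, one_mul, hm_def]
          norm_num
  have hm_pos : 0 < m := by
    rcases hm_nonneg.eq_or_lt with h | h
    · exfalso
      have hz : mi =ᵐ[Q] 0 :=
        (integral_eq_zero_iff_of_nonneg hmi_nonneg hmi_int).mp h.symm
      have hgz : g =ᵐ[Q] 0 := by
        filter_upwards [hz] with x hx
        simp only [hmi_def, Pi.zero_apply] at hx ⊢
        rcases min_eq_iff.mp hx with ⟨h1, _⟩ | ⟨h1, _⟩
        · exact h1
        · norm_num at h1
      have : (1 : ℝ) = 0 := by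
        rw [← hg_one, integral_congr_ae hgz]; simp
      norm_num at this
    · exact h
  -- sqrt g integrable wrt Q
  have hsqrt_int : Integrable (fun x => Real.sqrt (g x)) Q := by
    refine Integrable.mono' ((hg_int.add (integrable_const 1)).div_const 2)
      ((Real.continuous_sqrt.measurable.comp hg_meas).aestronglyMeasurable) ?_
    refine Filter.Eventually.of_forall fun x => ?_
    rw [Real.norm_eq_abs, abs_of_nonneg (Real.sqrt_nonneg _)]
    have := aux_sqrt_amgm (hg_nonneg x) (zero_le_one (α := ℝ))
    simpa using this
  set s : ℝ := ∫ x, Real.sqrt (g x) ∂Q with hs_def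
  -- Jensen 1 : exp(-KL/2) ≤ s
  have hinv_eq : (fun x => g x • (Real.sqrt (g x))⁻¹) = fun x => Real.sqrt (g x) :=
    funext fun x => by rw [smul_eq_mul, aux_mul_inv_sqrt (hg_nonneg x)]
  have hinv_int_P : Integrable (fun x => (Real.sqrt (g x))⁻¹) P := by
    rw [← integrable_rnDeriv_smul_iff hPQ]
    show Integrable (fun x => g x • (Real.sqrt (g x))⁻¹) Q
    rw [hinv_eq]; exact hsqrt_int
  have hexp_eq : (fun x => Real.exp (-(1/2) * Real.log (g x))) =ᵐ[P]
      fun x => (Real.sqrt (g x))⁻¹ := by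
    filter_upwards [hg_pos] with x hx
    rw [show -(1/2) * Real.log (g x) = -Real.log (Real.sqrt (g x)) by
        rw [Real.log_sqrt (hg_nonneg x)]; ring,
      Real.exp_neg, Real.exp_log (Real.sqrt_pos.mpr hx)]
  have hfi : Integrable (fun x => -(1/2) * Real.log (g x)) P := hkl.const_mul _
  have hgi : Integrable (Real.exp ∘ fun x => -(1/2) * Real.log (g x)) P :=
    hinv_int_P.congr hexp_eq.symm
  have hJ1 := convexOn_exp.map_integral_le (μ := P) continuous_exp.continuousOn
    isClosed_univ (Filter.Eventually.of_forall fun x => Set.mem_univ _) hfi hgi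
  rw [integral_congr_ae hexp_eq] at hJ1
  have hint_inv : ∫ x, (Real.sqrt (g x))⁻¹ ∂P = s := by
    rw [← integral_rnDeriv_smul hPQ (f := fun x => (Real.sqrt (g x))⁻¹)]
    show ∫ x, g x • (Real.sqrt (g x))⁻¹ ∂Q = s
    rw [hinv_eq]
  rw [hint_inv, integral_const_mul] at hJ1
  have hJ1' : Real.exp (-(klDiv' P Q) / 2) ≤ s := by
    rw [show -(klDiv' P Q) / 2 = -(1/2) * ∫ x, Real.log (g x) ∂P by rw [hKL_def]; ring]
    exact hJ1
  have hs_nonneg : 0 ≤ s := le_trans (Real.exp_pos _).le hJ1'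
  have h_exp_sq : Real.exp (-(klDiv' P Q)) ≤ s ^ 2 := by
    have : Real.exp (-(klDiv' P Q)) = (Real.exp (-(klDiv' P Q) / 2)) ^ 2 := by
      rw [sq, ← Real.exp_add]; ring_nf
    rw [this]
    exact pow_le_pow_left₀ (Real.exp_pos _).le hJ1' 2
  -- Cauchy–Schwarz style step : s^2 ≤ 2 m
  have hs_sq : s ^ 2 ≤ 2 * m := by
    set b : ℝ := Real.sqrt m with hb_def
    set a : ℝ := Real.sqrt 2 with ha_def
    have hb_pos : 0 < b := Real.sqrt_pos.mpr hm_pos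
    have ha_pos : 0 < a := Real.sqrt_pos.mpr (by norm_num)
    have hb2 : b * b = m := Real.mul_self_sqrt hm_pos.le
    have ha2 : a * a = 2 := Real.mul_self_sqrt (by norm_num)
    set c : ℝ := a / b with hc_def
    have hc_pos : 0 < c := div_pos ha_pos hb_pos
    have hpt : ∀ x, Real.sqrt (g x) ≤ (c * mi x + ma x / c) / 2 := by
      intro x
      have hprod : c * mi x * (ma x / c) = g x := by
        have hmm : mi x * ma x = g x := by
          simp only [hmi_def, hma_def]
          simpa using min_mul_max (g x) 1
        field_simp
        linear_combination hmm
      have := aux_sqrt_amgm (u := c * mi x) (v := ma x / c)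
        (mul_nonneg hc_pos.le (hmi_nonneg x))
        (div_nonneg (le_trans zero_le_one (le_max_right (g x) 1)) hc_pos.le)
      rwa [hprod] at this
    have hrhs_int : Integrable (fun x => (c * mi x + ma x / c) / 2) Q :=
      ((hmi_int.const_mul c).add (hma_int.div_const c)).div_const 2
    have hs_le : s ≤ (c * m + (2 - m) / c) / 2 := by
      calc s ≤ ∫ x, (c * mi x + ma x / c) / 2 ∂Q :=
            integral_mono hsqrt_int hrhs_int hpt
        _ = (c * m + (2 - m) / c) / 2 := by
            rw [integral_div, integral_add (hmi_int.const_mul c) (hma_int.div_const c),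
              integral_const_mul, integral_div, hM]
    have hkey : c * m + (2 - m) / c ≤ 2 * (a * b) := by
      have hcb : c * b = a := by rw [hc_def]; field_simp
      have h3 : c * c * m = 2 := by rw [← hb2, ← ha2, ← hcb]; ring
      have h4 : a * b * c = 2 := by
        rw [mul_assoc, mul_comm b c, hcb, ha2]
      rw [← sub_nonneg]
      have hrw : 2 * (a * b) - (c * m + (2 - m) / c) =
          (2 * (a * b * c) - c * c * m - (2 - m)) / c := by
        field_simp; ring
      rw [hrw]
      apply div_nonneg _ hc_pos.le
      rw [h3, h4]
      linarith
    have hs_le2 : s ≤ a * b := by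
      calc s ≤ (c * m + (2 - m) / c) / 2 := hs_le
        _ ≤ (2 * (a * b)) / 2 := by linarith
        _ = a * b := by ring
    calc s ^ 2 ≤ (a * b) ^ 2 := pow_le_pow_left₀ hs_nonneg hs_le2 2
      _ = 2 * m := by rw [sq]; nlinarith [ha2, hb2]
  -- TV bound: for every measurable A, |P A - Q A| ≤ 1 - m
  have htv : tvDist P Q ≤ 1 - m := by
    have : Nonempty {A : Set Ω // MeasurableSet A} := ⟨⟨∅, MeasurableSet.empty⟩⟩
    refine ciSup_le fun A => ?_
    have hA := A.2
    have hPA : (P A.1).toReal = ∫ x in A.1, g x ∂Q :=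
      (Measure.setIntegral_toReal_rnDeriv hPQ A.1).symm
    have hQA : (Q A.1).toReal = ∫ x in A.1, (1 : ℝ) ∂Q := by
      simp [Measure.restrict_apply_univ, Measure.real]
    have hgmi_int : Integrable (fun x => g x - mi x) Q := hg_int.sub hmi_int
    have h1mi_int : Integrable (fun x => 1 - mi x) Q := (integrable_const 1).sub hmi_int
    have hint1 : ∫ x, (g x - mi x) ∂Q = 1 - m := by
      rw [integral_sub hg_int hmi_int, hg_one]
    have hint2 : ∫ x, ((1 : ℝ) - mi x) ∂Q = 1 - m := by
      rw [integral_sub (integrable_const 1) hmi_int]; simp [hm_def]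
    rw [abs_le]
    constructor
    · -- Q A - P A ≤ 1 - m, i.e. -(1-m) ≤ P A - Q A
      have : (Q A.1).toReal - (P A.1).toReal ≤ 1 - m := by
        rw [hPA, hQA, ← integral_sub (integrable_const 1).integrableOn
          hg_int.integrableOn]
        calc ∫ x in A.1, ((1 : ℝ) - g x) ∂Q
            ≤ ∫ x in A.1, ((1 : ℝ) - mi x) ∂Q := by
              refine setIntegral_mono_on ((integrable_const 1).sub hg_int).integrableOn
                h1mi_int.integrableOn hA fun x _ => by
                  have := hmi_le_g x; linarith
          _ ≤ ∫ x, ((1 : ℝ) - mi x) ∂Q :=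
              setIntegral_le_integral h1mi_int
                (Filter.Eventually.of_forall fun x => by
                  show (0:ℝ) ≤ 1 - mi x; have := hmi_le_one x; linarith)
          _ = 1 - m := hint2
      linarith
    · have : (P A.1).toReal - (Q A.1).toReal ≤ 1 - m := by
        rw [hPA, hQA, ← integral_sub hg_int.integrableOn
          (integrable_const 1).integrableOn]
        calc ∫ x in A.1, (g x - 1) ∂Q
            ≤ ∫ x in A.1, (g x - mi x) ∂Q := by
              refine setIntegral_mono_on (hg_int.sub (integrable_const 1)).integrableOn
                hgmi_int.integrableOn hA fun x _ => by
                  have := hmi_le_one x; linarith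
          _ ≤ ∫ x, (g x - mi x) ∂Q :=
              setIntegral_le_integral hgmi_int
                (Filter.Eventually.of_forall fun x => by
                  show (0:ℝ) ≤ g x - mi x; have := hmi_le_g x; linarith)
          _ = 1 - m := hint1
      linarith
  -- Part 2 : Jensen for exp(KL) ≤ ∫ g² dQ
  set C : ℝ := ∫ x, (g x) ^ 2 ∂Q with hC_def
  have hchi' : Integrable (fun x => (g x) ^ 2) Q := hchi
  have hgP_int : Integrable g P := by
    rw [← integrable_rnDeriv_smul_iff hPQ]
    show Integrable (fun x => g x • g x) Q
    simpa [smul_eq_mul, sq] using hchi'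
  have hCP : ∫ x, g x ∂P = C := by
    rw [← integral_rnDeriv_smul hPQ (f := g)]
    show ∫ x, g x • g x ∂Q = C
    simp only [smul_eq_mul, hC_def, sq]
  have hC_ge_one : 1 ≤ C := by
    have h0 : 0 ≤ ∫ x, (g x - 1) ^ 2 ∂Q := integral_nonneg fun x => sq_nonneg _
    have hexpand : ∫ x, (g x - 1) ^ 2 ∂Q = C - 2 * 1 + 1 := by
      have heq : ∀ x, (g x - 1) ^ 2 = (g x) ^ 2 - 2 * g x + 1 := fun x => by ring
      have h1 : Integrable (fun x => (g x) ^ 2 - 2 * g x) Q :=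
        hchi'.sub (hg_int.const_mul 2)
      rw [integral_congr_ae (Filter.Eventually.of_forall heq),
        integral_add h1 (integrable_const 1),
        integral_sub hchi' (hg_int.const_mul 2), integral_const_mul, hg_one]
      simp [hC_def]
    linarith
  have hexp_eq2 : (fun x => Real.exp (Real.log (g x))) =ᵐ[P] g := by
    filter_upwards [hg_pos] with x hx
    exact Real.exp_log hx
  have hgi2 : Integrable (Real.exp ∘ fun x => Real.log (g x)) P :=
    hgP_int.congr hexp_eq2.symm
  have hJ2 := convexOn_exp.map_integral_le (μ := P) continuous_exp.continuousOn
    isClosed_univ (Filter.Eventually.of_forall fun x => Set.mem_univ _) hkl hgi2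
  rw [integral_congr_ae hexp_eq2, hCP] at hJ2
  have hJ2' : Real.exp (klDiv' P Q) ≤ C := by simpa [hKL_def] using hJ2
  have hchi_eq : 1 + chi2Div P Q = C := by
    simp only [chi2Div, hC_def]; ring
  constructor
  · have h1 : (1/2 : ℝ) * Real.exp (-(klDiv' P Q)) ≤ m := by
      have := le_trans h_exp_sq hs_sq
      linarith
    linarith
  · rw [hchi_eq]
    have hC_pos : 0 < C := lt_of_lt_of_le one_pos hC_ge_one
    have : 1 / C ≤ Real.exp (-(klDiv' P Q)) := by
      rw [Real.exp_neg]
      rw [one_div, inv_le_inv₀ hC_pos (Real.exp_pos _)] at *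
      · exact hJ2'
    linarith
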